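/- Let Σ ∈ ℝ^{p×p} be symmetric positive semidefinite, b ∈ ℝ^p, θ ∈ ℝ^n, and X ∈ ℝ^{n×p} any matrix. If ‖Σ^{1/2}b‖₂² + ‖θ‖₂² = 1, then ‖Xb − θ‖₂² ≥ (1/2) · min{ inf{ ‖Xb'‖₂² : ‖Σ^{1/2}b'‖₂ = 1, ‖b'‖₁ ≤ √2 r₁ }, 1 } − 2 |sup{ b''^T X^T θ'' : ‖Σ^{1/2}b''‖₂² + ‖θ''‖₂² = 1, ‖b''‖₁ ≤ r₁, ‖θ''‖₁ ≤ r₂ }|, provided also ‖b‖₁ ≤ r₁ and ‖θ‖₁ ≤ r₂. -/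

import Mathlib

open Finset

/-- The positive semidefinite square root, with its definition from the older Mathlib
(`Matrix.PosSemidef.sqrt`, since removed). -/
noncomputable def Matrix.PosSemidef.sqrt {n 𝕜 : Type*} [Fintype n] [RCLike 𝕜] [PartialOrder 𝕜] [DecidableEq n]
    {A : Matrix n n 𝕜} (hA : A.PosSemidef) : Matrix n n 𝕜 :=
  hA.1.eigenvectorUnitary.1 * Matrix.diagonal ((↑) ∘ Real.sqrt ∘ hA.1.eigenvalues) *
    (star hA.1.eigenvectorUnitary : Matrix n n 𝕜)

/-- The deterministic splitting argument inequality. -/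
theorem splitting_argument {n p : ℕ} (S : Matrix (Fin p) (Fin p) ℝ)
    (hS : S.PosSemidef) (X : Matrix (Fin n) (Fin p) ℝ)
    (b : Fin p → ℝ) (θ : Fin n → ℝ) (r₁ r₂ : ℝ) (hr₁ : 0 < r₁) (hr₂ : 0 < r₂)
    (hnorm : ∑ i, (hS.sqrt.mulVec b i) ^ 2 + ∑ i, (θ i) ^ 2 = 1)
    (hb1 : ∑ i, |b i| ≤ r₁) (hθ1 : ∑ i, |θ i| ≤ r₂) :
    ∑ i, (X.mulVec b i - θ i) ^ 2 ≥
      (1 / 2) * min (sInf {x : ℝ | ∃ b' : Fin p → ℝ,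
          (∑ i, (hS.sqrt.mulVec b' i) ^ 2) = 1 ∧ (∑ i, |b' i|) ≤ Real.sqrt 2 * r₁ ∧
          x = ∑ i, (X.mulVec b' i) ^ 2}) 1
      - 2 * |sSup {x : ℝ | ∃ (b'' : Fin p → ℝ) (θ'' : Fin n → ℝ),
          (∑ i, (hS.sqrt.mulVec b'' i) ^ 2 + ∑ i, (θ'' i) ^ 2 = 1) ∧
          (∑ i, |b'' i|) ≤ r₁ ∧ (∑ i, |θ'' i|) ≤ r₂ ∧
          x = ∑ i, θ'' i * X.mulVec b'' i}| := by
  set SupSet := {x : ℝ | ∃ (b'' : Fin p → ℝ) (θ'' : Fin n → ℝ),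
          (∑ i, (hS.sqrt.mulVec b'' i) ^ 2 + ∑ i, (θ'' i) ^ 2 = 1) ∧
          (∑ i, |b'' i|) ≤ r₁ ∧ (∑ i, |θ'' i|) ≤ r₂ ∧
          x = ∑ i, θ'' i * X.mulVec b'' i} with hSupSet
  set InfSet := {x : ℝ | ∃ b' : Fin p → ℝ,
          (∑ i, (hS.sqrt.mulVec b' i) ^ 2) = 1 ∧ (∑ i, |b' i|) ≤ Real.sqrt 2 * r₁ ∧
          x = ∑ i, (X.mulVec b' i) ^ 2} with hInfSet
  -- expansion
  have hexp : ∑ i, (X.mulVec b i - θ i) ^ 2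
      = ∑ i, (X.mulVec b i) ^ 2 + ∑ i, (θ i) ^ 2 - 2 * ∑ i, θ i * X.mulVec b i := by
    rw [Finset.mul_sum, ← Finset.sum_add_distrib, ← Finset.sum_sub_distrib]
    exact Finset.sum_congr rfl fun i _ => by ring
  -- sup set bounded above
  have hbdd : BddAbove SupSet := by
    refine ⟨r₂ * (∑ i, ∑ j, |X i j|) * r₁, ?_⟩
    rintro x ⟨b'', θ'', hn, hb'', hθ'', rfl⟩
    have hθb : ∀ i, |θ'' i| ≤ r₂ := fun i =>
      le_trans (Finset.single_le_sum (fun j _ => abs_nonneg (θ'' j)) (Finset.mem_univ i)) hθ''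
    have hbb : ∀ j, |b'' j| ≤ r₁ := fun j =>
      le_trans (Finset.single_le_sum (fun k _ => abs_nonneg (b'' k)) (Finset.mem_univ j)) hb''
    calc ∑ i, θ'' i * X.mulVec b'' i ≤ ∑ i, |θ'' i * X.mulVec b'' i| :=
          Finset.sum_le_sum fun i _ => le_abs_self _
      _ ≤ ∑ i, r₂ * ∑ j, |X i j| * r₁ := by
          refine Finset.sum_le_sum fun i _ => ?_
          rw [abs_mul]
          have h1 : |X.mulVec b'' i| ≤ ∑ j, |X i j| * r₁ := by
            show |∑ j, X i j * b'' j| ≤ _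
            refine le_trans (Finset.abs_sum_le_sum_abs _ _) (Finset.sum_le_sum fun j _ => ?_)
            rw [abs_mul]
            exact mul_le_mul_of_nonneg_left (hbb j) (abs_nonneg _)
          exact mul_le_mul (hθb i) h1 (abs_nonneg _) (le_of_lt hr₂)
      _ = r₂ * (∑ i, ∑ j, |X i j|) * r₁ := by
          rw [mul_assoc, Finset.sum_mul, Finset.mul_sum]
          exact Finset.sum_congr rfl fun i _ => by rw [Finset.sum_mul]
  have hmem : (∑ i, θ i * X.mulVec b i) ∈ SupSet := ⟨b, θ, hnorm, hb1, hθ1, rfl⟩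
  have hIPle : ∑ i, θ i * X.mulVec b i ≤ |sSup SupSet| :=
    (le_csSup hbdd hmem).trans (le_abs_self _)
  have hInf_nonneg : 0 ≤ sInf InfSet := by
    apply Real.sInf_nonneg
    rintro x ⟨b', _, _, rfl⟩
    exact Finset.sum_nonneg fun i _ => sq_nonneg _
  have hT0 : 0 ≤ ∑ i, (θ i) ^ 2 := Finset.sum_nonneg fun i _ => sq_nonneg _
  have hXb0 : 0 ≤ ∑ i, (X.mulVec b i) ^ 2 := Finset.sum_nonneg fun i _ => sq_nonneg _
  rcases le_or_gt (∑ i, (θ i) ^ 2) (1/2) with hT | hT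
  · -- A = 1 - T ≥ 1/2
    set A := ∑ i, (hS.sqrt.mulVec b i) ^ 2 with hA
    have hA0 : 0 ≤ A := Finset.sum_nonneg fun i _ => sq_nonneg _
    have hAhalf : (1:ℝ)/2 ≤ A := by linarith
    have hApos : 0 < A := by linarith
    have hsA : 0 < Real.sqrt A := Real.sqrt_pos.mpr hApos
    set b' := (Real.sqrt A)⁻¹ • b with hb'
    have h1 : (∑ i, (hS.sqrt.mulVec b' i) ^ 2) = 1 := by
      rw [hb', Matrix.mulVec_smul]
      simp only [Pi.smul_apply, smul_eq_mul, mul_pow]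
      rw [← Finset.mul_sum, ← hA, inv_pow, Real.sq_sqrt hA0]
      field_simp
    have h2 : (∑ i, |b' i|) ≤ Real.sqrt 2 * r₁ := by
      have : (∑ i, |b' i|) = (Real.sqrt A)⁻¹ * ∑ i, |b i| := by
        rw [Finset.mul_sum]
        exact Finset.sum_congr rfl fun i _ => by
          rw [hb', Pi.smul_apply, smul_eq_mul, abs_mul, abs_of_nonneg (le_of_lt (inv_pos.mpr hsA))]
      rw [this]
      have hinv : (Real.sqrt A)⁻¹ ≤ Real.sqrt 2 := by
        rw [← Real.sqrt_inv]
        have h2' : A⁻¹ ≤ 2 := by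
          rw [inv_le_comm₀ (by linarith) (by norm_num)]
          linarith
        exact Real.sqrt_le_sqrt h2'
      exact mul_le_mul hinv hb1 (Finset.sum_nonneg fun i _ => abs_nonneg _)
        (Real.sqrt_nonneg 2)
    have hXb' : (∑ i, (X.mulVec b' i) ^ 2) = A⁻¹ * ∑ i, (X.mulVec b i) ^ 2 := by
      rw [hb', Matrix.mulVec_smul, Finset.mul_sum]
      exact Finset.sum_congr rfl fun i _ => by
        rw [Pi.smul_apply, smul_eq_mul, mul_pow, inv_pow, Real.sq_sqrt hA0]
    have hmem' : (∑ i, (X.mulVec b' i) ^ 2) ∈ InfSet := ⟨b', h1, h2, rfl⟩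
    have hbddb : BddBelow InfSet := by
      refine ⟨0, ?_⟩
      rintro x ⟨c, _, _, rfl⟩
      exact Finset.sum_nonneg fun i _ => sq_nonneg _
    have hinfle : sInf InfSet ≤ A⁻¹ * ∑ i, (X.mulVec b i) ^ 2 := by
      rw [← hXb']; exact csInf_le hbddb hmem'
    have hkey : (1/2) * min (sInf InfSet) 1 ≤ ∑ i, (X.mulVec b i) ^ 2 := by
      have h3 : A * sInf InfSet ≤ ∑ i, (X.mulVec b i) ^ 2 := by
        have := mul_le_mul_of_nonneg_left hinfle (le_of_lt hApos)
        rwa [← mul_assoc, mul_inv_cancel₀ (ne_of_gt hApos), one_mul] at this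
      have h4 : (1/2) * sInf InfSet ≤ A * sInf InfSet :=
        mul_le_mul_of_nonneg_right hAhalf hInf_nonneg
      have h5 : min (sInf InfSet) 1 ≤ sInf InfSet := min_le_left _ _
      linarith
    rw [hexp]
    linarith
  · -- T > 1/2 case
    rw [hexp]
    have h5 : min (sInf InfSet) 1 ≤ 1 := min_le_right _ _
    linarith
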